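/- arXiv:2303.04780 — 3 statements merged into one kernel-verified Lean document; each statement's English description precedes it below -/
import Mathlib

section
/- Fix d ∈ {1,2,4,8} and integers p ≥ 2, q ≥ 1, and set ρ = (d(p+q)−2)/2. Define P(s) = Γ((s+ρ)/2)·Γ((−s+ρ)/2) / (Γ(s)·Γ(−s)·sin(π(s+dp−ρ)/2)·sin(π(s+dq−ρ)/2)). Then P is regular (extends holomorphically) at every point of the imaginary axis s ∈ iℝ \ {0}, and at s = 0. -/
open Filter

private lemma myAnalyticAt_Gamma {z : ℂ} (hz : Complex.Gamma z ≠ 0) :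
    AnalyticAt ℂ Complex.Gamma z := by
  have h1 : AnalyticAt ℂ (fun w : ℂ => (Complex.Gamma w)⁻¹) z :=
    Complex.differentiable_one_div_Gamma.analyticAt z
  have h2 := h1.inv (by simpa using hz)
  have h3 : (fun w : ℂ => ((Complex.Gamma w)⁻¹)⁻¹) = Complex.Gamma := by
    funext w; rw [inv_inv]
  rw [← h3]; exact h2

private lemma analyticAt_affine (c e : ℂ) (w : ℂ) :
    AnalyticAt ℂ (fun s : ℂ => c*s + e) w := by
  have h1 : AnalyticAt ℂ ((fun s : ℂ => c * s) + (fun _ : ℂ => e)) w :=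
    (analyticAt_const.mul analyticAt_id).add analyticAt_const
  exact h1

private lemma analyticAt_Gamma_affine (c e w : ℂ) (h : Complex.Gamma (c*w + e) ≠ 0) :
    AnalyticAt ℂ (fun s : ℂ => Complex.Gamma (c*s + e)) w := by
  have h2 := AnalyticAt.comp (g := Complex.Gamma) (f := fun s : ℂ => c*s + e)
    (x := w) (myAnalyticAt_Gamma h) (analyticAt_affine c e w)
  exact h2

private lemma myGammaRefl {s : ℂ} (hs0 : s ≠ 0)
    (hsin : Complex.sin ((Real.pi : ℂ) * s) ≠ 0) :
    Complex.Gamma s * Complex.Gamma (-s) * (s * Complex.sin ((Real.pi : ℂ) * s)) = -(Real.pi:ℂ) := by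
  have h := Complex.Gamma_mul_Gamma_one_sub s
  rw [show (1:ℂ) - s = -s + 1 by ring, Complex.Gamma_add_one (-s) (neg_ne_zero.mpr hs0)] at h
  field_simp at h
  rw [mul_comm s (Real.pi:ℂ), eq_div_iff hsin] at h
  linear_combination -h

private lemma denom_eq (ρ A dp dq : ℂ) (hA : dp - ρ = A) (hA2 : dq - ρ = 2 - A)
    (s : ℂ) (hs0 : s ≠ 0) (hsin : Complex.sin ((Real.pi:ℂ) * s) ≠ 0) :
    Complex.Gamma s * Complex.Gamma (-s) * Complex.sin ((Real.pi:ℂ) * (s + dp - ρ) / 2) *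
      Complex.sin ((Real.pi:ℂ) * (s + dq - ρ) / 2) =
    (Real.pi:ℂ) * (Complex.cos ((Real.pi:ℂ) * A) - Complex.cos ((Real.pi:ℂ) * s)) /
      (2 * s * Complex.sin ((Real.pi:ℂ) * s)) := by
  have hGG := myGammaRefl hs0 hsin
  have e1 : (Real.pi:ℂ) * (s + dp - ρ) / 2 = ((Real.pi:ℂ)*s + (Real.pi:ℂ)*A)/2 := by
    linear_combination ((Real.pi:ℂ)/2) * hA
  have e2 : (Real.pi:ℂ) * (s + dq - ρ) / 2 = ((Real.pi:ℂ)*s - (Real.pi:ℂ)*A)/2 + (Real.pi:ℂ) := by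
    linear_combination ((Real.pi:ℂ)/2) * hA2
  rw [e1, e2, Complex.sin_add_pi]
  have hcc := Complex.cos_sub_cos ((Real.pi:ℂ)*s) ((Real.pi:ℂ)*A)
  rw [eq_div_iff (by
    apply mul_ne_zero (mul_ne_zero two_ne_zero hs0) hsin)]
  linear_combination ((-2) * Complex.sin (((Real.pi:ℂ)*s + (Real.pi:ℂ)*A)/2) * Complex.sin (((Real.pi:ℂ)*s - (Real.pi:ℂ)*A)/2)) * hGG + (Real.pi:ℂ) * hcc

private lemma gamma_half_prod {s : ℂ} (hs0 : s ≠ 0)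
    (hsh : Complex.sin ((Real.pi:ℂ)*s/2) ≠ 0) :
    Complex.Gamma (s/2 + 1) * Complex.Gamma (1 - s/2)
      = s * (Real.pi:ℂ) / (2 * Complex.sin ((Real.pi:ℂ)*s/2)) := by
  have h := Complex.Gamma_mul_Gamma_one_sub (s/2)
  rw [show (Real.pi:ℂ) * (s/2) = (Real.pi:ℂ)*s/2 by ring] at h
  rw [Complex.Gamma_add_one (s/2) (by simpa using hs0), mul_assoc, h]
  field_simp

private lemma denom_eq_even (ρ A dp dq : ℂ) (hA : dp - ρ = A) (hA2 : dq - ρ = 2 - A)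
    (hc : Complex.cos ((Real.pi:ℂ)*A) = 1)
    (s : ℂ) (hs0 : s ≠ 0) (hsh : Complex.sin ((Real.pi:ℂ)*s/2) ≠ 0)
    (hch : Complex.cos ((Real.pi:ℂ)*s/2) ≠ 0) :
    Complex.Gamma s * Complex.Gamma (-s) * Complex.sin ((Real.pi:ℂ) * (s + dp - ρ) / 2) *
      Complex.sin ((Real.pi:ℂ) * (s + dq - ρ) / 2) =
    (Real.pi:ℂ)^2 / (4 * Complex.cos ((Real.pi:ℂ)*s/2) *
      (Complex.Gamma (s/2 + 1) * Complex.Gamma (1 - s/2))) := by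
  have hπ : (Real.pi : ℂ) ≠ 0 := Complex.ofReal_ne_zero.mpr Real.pi_ne_zero
  have hsin : Complex.sin ((Real.pi:ℂ)*s) ≠ 0 := by
    rw [show (Real.pi:ℂ)*s = 2*((Real.pi:ℂ)*s/2) by ring, Complex.sin_two_mul]
    exact mul_ne_zero (mul_ne_zero two_ne_zero hsh) hch
  rw [denom_eq ρ A dp dq hA hA2 s hs0 hsin, hc, gamma_half_prod hs0 hsh]
  have h1 : Complex.cos ((Real.pi:ℂ)*s) = 1 - 2 * Complex.sin ((Real.pi:ℂ)*s/2)^2 := by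
    have h0 := Complex.cos_two_mul ((Real.pi:ℂ)*s/2)
    rw [show 2*((Real.pi:ℂ)*s/2) = (Real.pi:ℂ)*s by ring] at h0
    linear_combination h0 + 2 * Complex.sin_sq_add_cos_sq ((Real.pi:ℂ)*s/2)
  have h2 : Complex.sin ((Real.pi:ℂ)*s) = 2 * Complex.sin ((Real.pi:ℂ)*s/2) * Complex.cos ((Real.pi:ℂ)*s/2) := by
    have h0 := Complex.sin_two_mul ((Real.pi:ℂ)*s/2)
    rw [show 2*((Real.pi:ℂ)*s/2) = (Real.pi:ℂ)*s by ring] at h0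
    exact h0
  rw [h1, h2]
  field_simp
  ring
/-- The Plancherel density
`P(s) = Γ((s+ρ)/2)Γ((-s+ρ)/2) / (Γ(s)Γ(-s) sin(π(s+dp-ρ)/2) sin(π(s+dq-ρ)/2))`
extends holomorphically to every point of the imaginary axis (including `s = 0`). -/
theorem plancherel_density_regular_on_imaginary_axis
    (d p q : ℕ) (hd : d = 1 ∨ d = 2 ∨ d = 4 ∨ d = 8) (hp : 2 ≤ p) (hq : 1 ≤ q)
    (ρ : ℝ) (hρ : ρ = ((d : ℝ) * (p + q) - 2) / 2) :
    ∀ t : ℝ, ∃ g : ℂ → ℂ, AnalyticAt ℂ g ((t : ℂ) * Complex.I) ∧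
      ∀ᶠ s in nhdsWithin ((t : ℂ) * Complex.I) {(t : ℂ) * Complex.I}ᶜ,
        Complex.Gamma ((s + ρ) / 2) * Complex.Gamma ((-s + ρ) / 2) /
          (Complex.Gamma s * Complex.Gamma (-s) *
            Complex.sin ((Real.pi : ℂ) * (s + (d : ℂ) * p - ρ) / 2) *
            Complex.sin ((Real.pi : ℂ) * (s + (d : ℂ) * q - ρ) / 2)) = g s := by
  have hπ : (Real.pi : ℂ) ≠ 0 := Complex.ofReal_ne_zero.mpr Real.pi_ne_zero
  have hρpos : 0 < ρ := by
    have hd1 : (1:ℝ) ≤ (d:ℝ) := by rcases hd with h|h|h|h <;> rw [h] <;> norm_num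
    have h3 : (3:ℝ) ≤ (p:ℝ) + (q:ℝ) := by
      have h4 : 3 ≤ p + q := by omega
      exact_mod_cast h4
    rw [hρ]; nlinarith
  set A : ℂ := (d:ℂ)*(p:ℂ) - (ρ:ℂ) with hAdef
  have hA : (d:ℂ)*(p:ℂ) - (ρ:ℂ) = A := hAdef.symm
  have hA2 : (d:ℂ)*(q:ℂ) - (ρ:ℂ) = 2 - A := by
    rw [hAdef, hρ]; push_cast; ring
  -- integer norms
  have hIntNorm : ∀ k : ℤ, k ≠ 0 → (1:ℝ) ≤ ‖(k:ℂ)‖ := by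
    intro k hk
    have h1 : ((k:ℂ)) = ((k:ℝ):ℂ) := by push_cast; rfl
    rw [h1, Complex.norm_real, Real.norm_eq_abs]
    exact_mod_cast Int.one_le_abs hk
  have hsmall_sin : ∀ s : ℂ, ‖s‖ < 1 → s ≠ 0 → Complex.sin ((Real.pi:ℂ)*s) ≠ 0 := by
    intro s h1 h0 hcon
    rw [Complex.sin_eq_zero_iff] at hcon
    obtain ⟨k, hk⟩ := hcon
    have hs : s = (k:ℂ) := mul_left_cancel₀ hπ (by rw [hk]; ring)
    rcases eq_or_ne k 0 with rfl | hkne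
    · exact h0 (by simpa using hs)
    · have h2 := hIntNorm k hkne; rw [hs] at h1; linarith
  have hsmall_sinh : ∀ s : ℂ, ‖s‖ < 1 → s ≠ 0 → Complex.sin ((Real.pi:ℂ)*s/2) ≠ 0 := by
    intro s h1 h0 hcon
    rw [Complex.sin_eq_zero_iff] at hcon
    obtain ⟨k, hk⟩ := hcon
    have hs : s = 2*(k:ℂ) := mul_left_cancel₀ hπ (by linear_combination 2*hk)
    rcases eq_or_ne k 0 with rfl | hkne
    · exact h0 (by simpa using hs)
    · have h2 := hIntNorm k hkne
      have h3 : ‖(2:ℂ)*(k:ℂ)‖ = 2 * ‖(k:ℂ)‖ := by rw [norm_mul]; norm_num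
      rw [hs, h3] at h1; linarith
  have hsmall_cosh : ∀ s : ℂ, ‖s‖ < 1 → Complex.cos ((Real.pi:ℂ)*s/2) ≠ 0 := by
    intro s h1 hcon
    rw [Complex.cos_eq_zero_iff] at hcon
    obtain ⟨k, hk⟩ := hcon
    have hs : s = 2*(k:ℂ)+1 := mul_left_cancel₀ hπ (by linear_combination 2*hk)
    have h2 := hIntNorm (2*k+1) (by omega)
    have h3 : ((2*k+1 : ℤ):ℂ) = 2*(k:ℂ)+1 := by push_cast; ring
    rw [h3] at h2; rw [hs] at h1; linarith
  -- analyticity of the Gamma factors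
  have hΓplus : ∀ w : ℂ, Complex.Gamma ((w + (ρ:ℂ))/2) ≠ 0 →
      AnalyticAt ℂ (fun s : ℂ => Complex.Gamma ((s + (ρ:ℂ))/2)) w := by
    intro w hw
    have he : (fun s : ℂ => Complex.Gamma ((s + (ρ:ℂ))/2))
        = (fun s : ℂ => Complex.Gamma ((1/2:ℂ)*s + (ρ:ℂ)/2)) := by
      funext s; congr 1; ring
    rw [he]
    apply analyticAt_Gamma_affine
    rw [show (1/2:ℂ)*w + (ρ:ℂ)/2 = (w + (ρ:ℂ))/2 by ring]
    exact hw
  have hΓminus : ∀ w : ℂ, Complex.Gamma ((-w + (ρ:ℂ))/2) ≠ 0 →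
      AnalyticAt ℂ (fun s : ℂ => Complex.Gamma ((-s + (ρ:ℂ))/2)) w := by
    intro w hw
    have he : (fun s : ℂ => Complex.Gamma ((-s + (ρ:ℂ))/2))
        = (fun s : ℂ => Complex.Gamma ((-(1/2):ℂ)*s + (ρ:ℂ)/2)) := by
      funext s; congr 1; ring
    rw [he]
    apply analyticAt_Gamma_affine
    rw [show (-(1/2):ℂ)*w + (ρ:ℂ)/2 = (-w + (ρ:ℂ))/2 by ring]
    exact hw
  intro t
  by_cases ht : t = 0
  · -- point is 0
    subst ht
    rw [show ((0:ℝ):ℂ) * Complex.I = 0 by simp]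
    have hΓρ : Complex.Gamma (((0:ℂ) + (ρ:ℂ))/2) ≠ 0 := by
      rw [show ((0:ℂ) + (ρ:ℂ))/2 = ((ρ/2 : ℝ):ℂ) by push_cast; ring]
      apply Complex.Gamma_ne_zero_of_re_pos
      rw [Complex.ofReal_re]; positivity
    have hΓρ' : Complex.Gamma ((-(0:ℂ) + (ρ:ℂ))/2) ≠ 0 := by
      rw [show (-(0:ℂ) + (ρ:ℂ))/2 = ((ρ/2 : ℝ):ℂ) by push_cast; ring]
      apply Complex.Gamma_ne_zero_of_re_pos
      rw [Complex.ofReal_re]; positivity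
    have hN : AnalyticAt ℂ (fun s : ℂ => Complex.Gamma ((s + (ρ:ℂ))/2) *
        Complex.Gamma ((-s + (ρ:ℂ))/2)) 0 := (hΓplus 0 hΓρ).mul (hΓminus 0 hΓρ')
    have hball : ∀ᶠ s : ℂ in nhdsWithin 0 {(0:ℂ)}ᶜ, ‖s‖ < 1 ∧ s ≠ 0 := by
      have h1 : ∀ᶠ s : ℂ in nhds (0:ℂ), ‖s‖ < 1 := by
        filter_upwards [Metric.ball_mem_nhds (0:ℂ) one_pos] with s hs
        simpa [dist_zero_right] using hs
      filter_upwards [nhdsWithin_le_nhds h1, self_mem_nhdsWithin] with s h2 h3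
      exact ⟨h2, h3⟩
    by_cases hc : Complex.cos ((Real.pi:ℂ)*A) = 1
    · -- even case
      refine ⟨fun s => Complex.Gamma ((s + (ρ:ℂ))/2) * Complex.Gamma ((-s + (ρ:ℂ))/2) *
          (4 * Complex.cos ((Real.pi:ℂ)*s/2) *
            (Complex.Gamma (s/2 + 1) * Complex.Gamma (1 - s/2))) / (Real.pi:ℂ)^2, ?_, ?_⟩
      · apply AnalyticAt.div _ analyticAt_const (pow_ne_zero 2 hπ)
        apply AnalyticAt.mul hN
        apply AnalyticAt.mul
        · exact analyticAt_const.mul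
            ((Complex.differentiable_cos.comp (by fun_prop)).analyticAt 0)
        · have hg1 : AnalyticAt ℂ (fun s : ℂ => Complex.Gamma (s/2 + 1)) 0 := by
            have he : (fun s : ℂ => Complex.Gamma (s/2 + 1))
                = (fun s : ℂ => Complex.Gamma ((1/2:ℂ)*s + 1)) := by
              funext s; congr 1; ring
            rw [he]
            apply analyticAt_Gamma_affine
            rw [show (1/2:ℂ)*0 + 1 = ((1:ℝ):ℂ) by norm_num]
            apply Complex.Gamma_ne_zero_of_re_pos
            rw [Complex.ofReal_re]; norm_num
          have hg2 : AnalyticAt ℂ (fun s : ℂ => Complex.Gamma (1 - s/2)) 0 := by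
            have he : (fun s : ℂ => Complex.Gamma (1 - s/2))
                = (fun s : ℂ => Complex.Gamma ((-(1/2):ℂ)*s + 1)) := by
              funext s; congr 1; ring
            rw [he]
            apply analyticAt_Gamma_affine
            rw [show (-(1/2):ℂ)*0 + 1 = ((1:ℝ):ℂ) by norm_num]
            apply Complex.Gamma_ne_zero_of_re_pos
            rw [Complex.ofReal_re]; norm_num
          exact hg1.mul hg2
      · filter_upwards [hball] with s hs
        obtain ⟨hs1, hs0⟩ := hs
        rw [denom_eq_even (ρ:ℂ) A ((d:ℂ)*(p:ℂ)) ((d:ℂ)*(q:ℂ)) hA hA2 hc s hs0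
          (hsmall_sinh s hs1 hs0) (hsmall_cosh s hs1), div_div_eq_mul_div]
    · -- generic case at 0
      refine ⟨fun s => Complex.Gamma ((s + (ρ:ℂ))/2) * Complex.Gamma ((-s + (ρ:ℂ))/2) *
          (2 * s * Complex.sin ((Real.pi:ℂ)*s)) /
          ((Real.pi:ℂ) * (Complex.cos ((Real.pi:ℂ)*A) - Complex.cos ((Real.pi:ℂ)*s))), ?_, ?_⟩
      · apply AnalyticAt.div
        · exact hN.mul ((by fun_prop : Differentiable ℂ
            (fun s : ℂ => 2 * s * Complex.sin ((Real.pi:ℂ)*s))).analyticAt 0)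
        · exact ((by fun_prop : Differentiable ℂ (fun s : ℂ =>
            (Real.pi:ℂ) * (Complex.cos ((Real.pi:ℂ)*A) - Complex.cos ((Real.pi:ℂ)*s)))).analyticAt 0)
        · apply mul_ne_zero hπ
          rw [show (Real.pi:ℂ) * (0:ℂ) = 0 by ring, Complex.cos_zero]
          exact sub_ne_zero.mpr hc
      · filter_upwards [hball] with s hs
        obtain ⟨hs1, hs0⟩ := hs
        rw [denom_eq (ρ:ℂ) A ((d:ℂ)*(p:ℂ)) ((d:ℂ)*(q:ℂ)) hA hA2 s hs0
          (hsmall_sin s hs1 hs0), div_div_eq_mul_div]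
  · -- t ≠ 0
    set z : ℂ := (t:ℂ) * Complex.I with hzdef
    have hz0 : z ≠ 0 := mul_ne_zero (Complex.ofReal_ne_zero.mpr ht) Complex.I_ne_zero
    have hsz : Complex.sin ((Real.pi:ℂ)*z) ≠ 0 := by
      intro hcon
      rw [Complex.sin_eq_zero_iff] at hcon
      obtain ⟨k, hk⟩ := hcon
      have h1 : ((Real.pi*t : ℝ):ℂ) * Complex.I = (k:ℂ)*(Real.pi:ℂ) := by
        rw [← hk, hzdef]; push_cast; ring
      have h2 := congrArg Complex.im h1
      simp at h2
      exact ht (by simpa [Real.pi_ne_zero] using h2)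
    have hΓz : Complex.Gamma ((z + (ρ:ℂ))/2) ≠ 0 := by
      apply Complex.Gamma_ne_zero
      intro m hcon
      have h1 := congrArg Complex.im hcon
      simp [hzdef] at h1
      exact ht h1
    have hΓz' : Complex.Gamma ((-z + (ρ:ℂ))/2) ≠ 0 := by
      apply Complex.Gamma_ne_zero
      intro m hcon
      have h1 := congrArg Complex.im hcon
      simp [hzdef] at h1
      exact ht h1
    have hcosdiff : Complex.cos ((Real.pi:ℂ)*A) - Complex.cos ((Real.pi:ℂ)*z) ≠ 0 := by
      have h1 : Complex.cos ((Real.pi:ℂ)*z) = ((Real.cosh (Real.pi*t) : ℝ):ℂ) := by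
        rw [show (Real.pi:ℂ)*z = ((Real.pi*t : ℝ):ℂ) * Complex.I by rw [hzdef]; push_cast; ring]
        rw [Complex.cos_mul_I, Complex.ofReal_cosh]
      have h2 : Complex.cos ((Real.pi:ℂ)*A) = ((Real.cos (Real.pi*((d:ℝ)*(p:ℝ) - ρ)) : ℝ):ℂ) := by
        rw [show (Real.pi:ℂ)*A = ((Real.pi*((d:ℝ)*(p:ℝ) - ρ) : ℝ):ℂ) by rw [hAdef]; push_cast; ring]
        rw [Complex.ofReal_cos]
      rw [h1, h2, ← Complex.ofReal_sub, Complex.ofReal_ne_zero]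
      have h3 : Real.cos (Real.pi*((d:ℝ)*(p:ℝ) - ρ)) ≤ 1 := Real.cos_le_one _
      have h4 : 1 < Real.cosh (Real.pi*t) :=
        Real.one_lt_cosh.mpr (mul_ne_zero Real.pi_ne_zero ht)
      intro hcon
      nlinarith
    have hev : ∀ᶠ s : ℂ in nhds z, s ≠ 0 ∧ Complex.sin ((Real.pi:ℂ)*s) ≠ 0 := by
      have h1 : ∀ᶠ s : ℂ in nhds z, s ≠ 0 :=
        (continuous_id.continuousAt).eventually_ne hz0
      have h2 : ∀ᶠ s : ℂ in nhds z, Complex.sin ((Real.pi:ℂ)*s) ≠ 0 :=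
        ((Complex.continuous_sin.comp (continuous_const.mul continuous_id)).continuousAt).eventually_ne hsz
      filter_upwards [h1, h2] with s hs1 hs2
      exact ⟨hs1, hs2⟩
    refine ⟨fun s => Complex.Gamma ((s + (ρ:ℂ))/2) * Complex.Gamma ((-s + (ρ:ℂ))/2) *
        (2 * s * Complex.sin ((Real.pi:ℂ)*s)) /
        ((Real.pi:ℂ) * (Complex.cos ((Real.pi:ℂ)*A) - Complex.cos ((Real.pi:ℂ)*s))), ?_, ?_⟩
    · apply AnalyticAt.div
      · exact ((hΓplus z hΓz).mul (hΓminus z hΓz')).mul ((by fun_prop : Differentiable ℂ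
          (fun s : ℂ => 2 * s * Complex.sin ((Real.pi:ℂ)*s))).analyticAt z)
      · exact ((by fun_prop : Differentiable ℂ (fun s : ℂ =>
          (Real.pi:ℂ) * (Complex.cos ((Real.pi:ℂ)*A) - Complex.cos ((Real.pi:ℂ)*s)))).analyticAt z)
      · exact mul_ne_zero hπ hcosdiff
    · filter_upwards [nhdsWithin_le_nhds hev] with s hs
      obtain ⟨hs0, hssin⟩ := hs
      rw [denom_eq (ρ:ℂ) A ((d:ℂ)*(p:ℂ)) ((d:ℂ)*(q:ℂ)) hA hA2 s hs0 hssin,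
        div_div_eq_mul_div]
end

section
/- For d = 1 with p even and q odd (p ≥ 2, q ≥ 1), ρ = (p+q−2)/2, the function y ↦ Γ((y+ρ)/2)Γ((ρ−y)/2)/(Γ(y)Γ(−y)·sin(π(y+p−ρ)/2)·sin(π(y+q−ρ)/2)) has, on the ray y > 0: simple poles at y ∈ (ρ+2ℤ) ∩ (0,ρ), simple poles at y ∈ (ρ+2ℤ+1) ∩ (0,∞), and poles of order exactly two at y ∈ ρ + 2ℕ. -/
open Filter

/-- The meromorphically continued Plancherel density for `d = 1`
(real hyperbolic space `O(p,q)/(O(1)×O(p-1,q))`), evaluated at `ν = -iy`. -/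
noncomputable def plancherelDensityReal (p q : ℕ) (ρ : ℝ) (σ : ℂ) : ℂ :=
  Complex.Gamma ((σ + ρ) / 2) * Complex.Gamma (((ρ : ℂ) - σ) / 2) /
    (Complex.Gamma σ * Complex.Gamma (-σ) *
      Complex.sin ((Real.pi : ℂ) * (σ + (p : ℂ) - ρ) / 2) *
      Complex.sin ((Real.pi : ℂ) * (σ + (q : ℂ) - ρ) / 2))

namespace PlancherelAux

open Complex

/-- `Gamma` is analytic away from its poles. -/
lemma analyticAt_Gamma' {z : ℂ} (h : ∀ m : ℕ, z ≠ -(m : ℂ)) :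
    AnalyticAt ℂ Complex.Gamma z := by
  have h1 : AnalyticAt ℂ (fun s : ℂ => (Complex.Gamma s)⁻¹) z :=
    Complex.differentiable_one_div_Gamma.analyticAt z
  have h2 := h1.inv (inv_ne_zero (Complex.Gamma_ne_zero h))
  have h3 : (fun s : ℂ => ((Complex.Gamma s)⁻¹)⁻¹) = Complex.Gamma := by
    funext s; rw [inv_inv]
  simpa only [Pi.inv_def, h3] using h2

lemma exists_factor {F : ℂ → ℂ} {y : ℂ} (hF : AnalyticAt ℂ F y) :
    ∃ G : ℂ → ℂ, AnalyticAt ℂ G y ∧ G y = deriv F y ∧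
      ∀ σ, F σ = F y + (σ - y) * G σ := by
  refine ⟨dslope F y, ?_, dslope_same F y, fun σ => ?_⟩
  · obtain ⟨p, hp⟩ := hF
    exact ⟨p.fslope, hp.has_fpower_series_dslope_fslope⟩
  · have h := sub_smul_dslope F y σ
    rw [smul_eq_mul] at h
    linear_combination -h

lemma simple_pole {f N D : ℂ → ℂ} {y : ℂ} (hN : AnalyticAt ℂ N y) (hN0 : N y ≠ 0)
    (hD : AnalyticAt ℂ D y) (hD0 : D y = 0) (hD' : deriv D y ≠ 0)
    (hf : ∀ᶠ σ in nhdsWithin y {y}ᶜ, f σ = N σ / D σ) :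
    ∃ c : ℂ, c ≠ 0 ∧ ∃ g : ℂ → ℂ, AnalyticAt ℂ g y ∧
      ∀ᶠ σ in nhdsWithin y {y}ᶜ, f σ = c / (σ - y) + g σ := by
  obtain ⟨E, hE, hEy, hEid⟩ := exists_factor hD
  have hE0 : E y ≠ 0 := hEy ▸ hD'
  have hh : AnalyticAt ℂ (fun σ => N σ / E σ) y := hN.div hE hE0
  obtain ⟨G, hG, -, hGid⟩ := exists_factor hh
  refine ⟨N y / E y, div_ne_zero hN0 hE0, G, hG, ?_⟩
  have hEne : ∀ᶠ σ in nhdsWithin y {y}ᶜ, E σ ≠ 0 :=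
    nhdsWithin_le_nhds (hE.continuousAt.eventually_ne hE0)
  filter_upwards [hf, hEne, self_mem_nhdsWithin] with σ hfσ hEσ hσy
  have hσy' : σ - y ≠ 0 := sub_ne_zero.mpr hσy
  have hDσ : D σ = (σ - y) * E σ := by rw [hEid σ, hD0, zero_add]
  have key : N σ = (N y / E y + (σ - y) * G σ) * E σ := by
    rw [← hGid σ, div_mul_cancel₀ _ hEσ]
  rw [hfσ, hDσ, key]
  field_simp

lemma double_pole {f N D₁ D₂ : ℂ → ℂ} {y : ℂ} (hN : AnalyticAt ℂ N y) (hN0 : N y ≠ 0)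
    (hD₁ : AnalyticAt ℂ D₁ y) (hD₁0 : D₁ y = 0) (hD₁' : deriv D₁ y ≠ 0)
    (hD₂ : AnalyticAt ℂ D₂ y) (hD₂0 : D₂ y = 0) (hD₂' : deriv D₂ y ≠ 0)
    (hf : ∀ᶠ σ in nhdsWithin y {y}ᶜ, f σ = N σ / (D₁ σ * D₂ σ)) :
    ∃ c₂ c₁ : ℂ, c₂ ≠ 0 ∧ ∃ g : ℂ → ℂ, AnalyticAt ℂ g y ∧
      ∀ᶠ σ in nhdsWithin y {y}ᶜ, f σ = c₂ / (σ - y) ^ 2 + c₁ / (σ - y) + g σ := by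
  obtain ⟨E₁, hE₁, hE₁y, hE₁id⟩ := exists_factor hD₁
  obtain ⟨E₂, hE₂, hE₂y, hE₂id⟩ := exists_factor hD₂
  have hE₁0 : E₁ y ≠ 0 := hE₁y ▸ hD₁'
  have hE₂0 : E₂ y ≠ 0 := hE₂y ▸ hD₂'
  have hhE : E₁ y * E₂ y ≠ 0 := mul_ne_zero hE₁0 hE₂0
  have hh : AnalyticAt ℂ (fun σ => N σ / (E₁ σ * E₂ σ)) y :=
    hN.div (hE₁.mul hE₂) hhE
  obtain ⟨G, hG, -, hGid⟩ := exists_factor hh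
  obtain ⟨G₂, hG₂, -, hG₂id⟩ := exists_factor hG
  refine ⟨N y / (E₁ y * E₂ y), G y, div_ne_zero hN0 hhE, G₂, hG₂, ?_⟩
  have hEne : ∀ᶠ σ in nhdsWithin y {y}ᶜ, E₁ σ ≠ 0 ∧ E₂ σ ≠ 0 :=
    nhdsWithin_le_nhds ((hE₁.continuousAt.eventually_ne hE₁0).and
      (hE₂.continuousAt.eventually_ne hE₂0))
  filter_upwards [hf, hEne, self_mem_nhdsWithin] with σ hfσ hEσ hσy
  obtain ⟨hE₁σ, hE₂σ⟩ := hEσ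
  have hσy' : σ - y ≠ 0 := sub_ne_zero.mpr hσy
  have hD₁σ : D₁ σ = (σ - y) * E₁ σ := by rw [hE₁id σ, hD₁0, zero_add]
  have hD₂σ : D₂ σ = (σ - y) * E₂ σ := by rw [hE₂id σ, hD₂0, zero_add]
  have key : N σ = (N y / (E₁ y * E₂ y) + (σ - y) * (G y + (σ - y) * G₂ σ)) *
      (E₁ σ * E₂ σ) := by
    rw [← hG₂id σ, ← hGid σ, div_mul_cancel₀ _ (mul_ne_zero hE₁σ hE₂σ)]
  rw [hfσ, hD₁σ, hD₂σ, key]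
  field_simp
  ring

lemma cos_ne_zero_of_sin_eq_zero {z : ℂ} (h : Complex.sin z = 0) : Complex.cos z ≠ 0 := by
  intro h0
  have h1 := Complex.sin_sq_add_cos_sq z
  rw [h, h0] at h1
  norm_num at h1

lemma sin_linear_analyticAt (b c : ℂ) (y : ℂ) :
    AnalyticAt ℂ (fun σ : ℂ => Complex.sin (b * σ + c)) y :=
  (Complex.differentiable_sin.comp
    ((differentiable_id.const_mul b).add_const c)).analyticAt y

lemma sin_linear_deriv (b c : ℂ) (y : ℂ) :
    deriv (fun σ : ℂ => Complex.sin (b * σ + c)) y = Complex.cos (b * y + c) * b := by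
  have h1 : HasDerivAt (fun σ : ℂ => b * σ + c) b y := by
    simpa using ((hasDerivAt_id y).const_mul b).add_const c
  have h2 : HasDerivAt (fun σ : ℂ => Complex.sin (b * σ + c))
      (Complex.cos (b * y + c) * b) y := by
    have := (Complex.hasDerivAt_sin (b * y + c)).comp y h1; exact this
  exact h2.deriv

lemma sin_pi_int {x : ℝ} (m : ℤ) (hm : x = (m : ℝ)) :
    Complex.sin ((Real.pi : ℂ) * (x : ℂ)) = 0 := by
  have : (Real.pi : ℂ) * (x : ℂ) = (m : ℂ) * (Real.pi : ℂ) := by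
    rw [hm]; push_cast; ring
  rw [this]
  exact Complex.sin_int_mul_pi m

lemma sin_pi_ne_zero {x : ℝ} (h : ∀ k : ℤ, x ≠ (k : ℝ)) :
    Complex.sin ((Real.pi : ℂ) * (x : ℂ)) ≠ 0 := by
  intro h0
  obtain ⟨k, hk⟩ := Complex.sin_eq_zero_iff.mp h0
  have hπ : (Real.pi : ℂ) ≠ 0 := Complex.ofReal_ne_zero.mpr Real.pi_ne_zero
  have hx : (x : ℂ) = (k : ℂ) := by
    apply mul_left_cancel₀ hπ
    rw [hk]; ring
  exact h k (by exact_mod_cast hx)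

lemma ne_int_of_odd {x : ℝ} {n : ℤ} (h : 2 * x = 2 * (n : ℝ) + 1) :
    ∀ m : ℤ, x ≠ (m : ℝ) := by
  rintro m rfl
  have h2 : 2 * m = 2 * n + 1 := by exact_mod_cast h
  omega

lemma pos_ne_neg_nat {x : ℝ} (hx : 0 < x) : ∀ m : ℕ, x ≠ -(m : ℝ) := by
  intro m h
  have : -(m : ℝ) ≤ 0 := neg_nonpos.mpr (Nat.cast_nonneg m)
  linarith [h ▸ hx]

lemma gamma_pt {x : ℝ} (hx : ∀ m : ℕ, x ≠ -(m : ℝ)) :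
    AnalyticAt ℂ Complex.Gamma (x : ℂ) ∧ Complex.Gamma (x : ℂ) ≠ 0 := by
  have h : ∀ m : ℕ, (x : ℂ) ≠ -(m : ℂ) := by
    intro m hm
    exact hx m (by exact_mod_cast hm)
  exact ⟨analyticAt_Gamma' h, Complex.Gamma_ne_zero h⟩

lemma plancherel_swap (p q : ℕ) (ρ : ℝ) (σ : ℂ) :
    plancherelDensityReal p q ρ σ = plancherelDensityReal q p ρ σ := by
  unfold plancherelDensityReal; ring

end PlancherelAux

open PlancherelAux in
/-- the simple-pole case : the `p`-sine vanishes to order 1 at `y` and nothing else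
degenerates. -/
lemma plancherel_simple_case (p q : ℕ) (ρ y : ℝ) (hy : 0 < y) (hyρ : 0 < y + ρ)
    (hG2 : ∀ m : ℕ, (ρ - y) / 2 ≠ -(m : ℝ))
    (hyint : ∀ m : ℤ, y ≠ (m : ℝ))
    (hpz : ∃ m : ℤ, (y + p - ρ) / 2 = (m : ℝ))
    (hqz : ∀ k : ℤ, (y + q - ρ) / 2 ≠ (k : ℝ)) :
    ∃ c : ℂ, c ≠ 0 ∧ ∃ g : ℂ → ℂ, AnalyticAt ℂ g (y : ℂ) ∧
      ∀ᶠ σ in nhdsWithin (y : ℂ) {(y : ℂ)}ᶜ,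
        plancherelDensityReal p q ρ σ = c / (σ - y) + g σ := by
  obtain ⟨m, hm⟩ := hpz
  -- casts
  have c1 : ((y : ℂ) + (ρ : ℂ)) / 2 = (((y + ρ) / 2 : ℝ) : ℂ) := by push_cast; ring
  have c2 : ((ρ : ℂ) - (y : ℂ)) / 2 = (((ρ - y) / 2 : ℝ) : ℂ) := by push_cast; ring
  have c3 : -(y : ℂ) = ((-y : ℝ) : ℂ) := by push_cast; ring
  have cq : (Real.pi : ℂ) * ((y : ℂ) + (q : ℂ) - (ρ : ℂ)) / 2
      = (Real.pi : ℂ) * ((((y + q - ρ) / 2 : ℝ) : ℂ)) := by push_cast; ring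
  have cp : (Real.pi : ℂ) / 2 * (y : ℂ) + (Real.pi : ℂ) * ((p : ℂ) - (ρ : ℂ)) / 2
      = (Real.pi : ℂ) * ((((y + p - ρ) / 2 : ℝ) : ℂ)) := by push_cast; ring
  -- Gamma facts
  have g1 := gamma_pt (pos_ne_neg_nat (by linarith : (0:ℝ) < (y + ρ) / 2))
  have g2 := gamma_pt hG2
  have g3 := gamma_pt (pos_ne_neg_nat hy)
  have g4 : AnalyticAt ℂ Complex.Gamma ((-y : ℝ) : ℂ) ∧
      Complex.Gamma ((-y : ℝ) : ℂ) ≠ 0 := by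
    refine gamma_pt ?_
    intro j hj
    exact hyint (j : ℤ) (by push_cast; linarith [hj])
  have hsq : Complex.sin ((Real.pi : ℂ) * ((y : ℂ) + (q : ℂ) - (ρ : ℂ)) / 2) ≠ 0 := by
    rw [cq]; exact sin_pi_ne_zero hqz
  -- analyticity of the pieces
  have a1 : AnalyticAt ℂ (fun σ : ℂ => Complex.Gamma ((σ + (ρ : ℂ)) / 2)) (y : ℂ) :=
    AnalyticAt.comp (g := Complex.Gamma) (f := fun σ : ℂ => (σ + (ρ : ℂ)) / 2)
      (show AnalyticAt ℂ Complex.Gamma (((y:ℂ) + (ρ:ℂ)) / 2) by rw [c1]; exact g1.1)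
      (((differentiable_id.add_const _).div_const 2).analyticAt _)
  have a2 : AnalyticAt ℂ (fun σ : ℂ => Complex.Gamma (((ρ : ℂ) - σ) / 2)) (y : ℂ) :=
    AnalyticAt.comp (g := Complex.Gamma) (f := fun σ : ℂ => ((ρ : ℂ) - σ) / 2)
      (show AnalyticAt ℂ Complex.Gamma (((ρ:ℂ) - (y:ℂ)) / 2) by rw [c2]; exact g2.1)
      ((((differentiable_const _).sub differentiable_id).div_const 2).analyticAt _)
  have a3 : AnalyticAt ℂ (fun σ : ℂ => Complex.Gamma σ) (y : ℂ) := g3.1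
  have a4 : AnalyticAt ℂ (fun σ : ℂ => Complex.Gamma (-σ)) (y : ℂ) :=
    AnalyticAt.comp (g := Complex.Gamma) (f := fun σ : ℂ => -σ)
      (show AnalyticAt ℂ Complex.Gamma (-(y:ℂ)) by rw [c3]; exact g4.1)
      (differentiable_id.neg.analyticAt _)
  have a5 : AnalyticAt ℂ
      (fun σ : ℂ => Complex.sin ((Real.pi : ℂ) * (σ + (q : ℂ) - (ρ : ℂ)) / 2)) (y : ℂ) :=
    (Complex.differentiable_sin.comp
      ((((differentiable_id.add_const _).sub_const _).const_mul _).div_const 2)).analyticAt _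
  -- N and its properties
  have hN : AnalyticAt ℂ (fun σ : ℂ =>
      Complex.Gamma ((σ + (ρ : ℂ)) / 2) * Complex.Gamma (((ρ : ℂ) - σ) / 2) /
        (Complex.Gamma σ * Complex.Gamma (-σ) *
          Complex.sin ((Real.pi : ℂ) * (σ + (q : ℂ) - (ρ : ℂ)) / 2))) (y : ℂ) := by
    refine (a1.mul a2).div ((a3.mul a4).mul a5) ?_
    refine mul_ne_zero (mul_ne_zero g3.2 ?_) hsq
    rw [c3]; exact g4.2
  have hN0 : Complex.Gamma (((y : ℂ) + (ρ : ℂ)) / 2) *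
      Complex.Gamma (((ρ : ℂ) - (y : ℂ)) / 2) /
      (Complex.Gamma (y : ℂ) * Complex.Gamma (-(y : ℂ)) *
        Complex.sin ((Real.pi : ℂ) * ((y : ℂ) + (q : ℂ) - (ρ : ℂ)) / 2)) ≠ 0 := by
    apply div_ne_zero
    · exact mul_ne_zero (by rw [c1]; exact g1.2) (by rw [c2]; exact g2.2)
    · refine mul_ne_zero (mul_ne_zero g3.2 ?_) hsq
      rw [c3]; exact g4.2
  -- D and its properties
  have hD : AnalyticAt ℂ (fun σ : ℂ => Complex.sin
      ((Real.pi : ℂ) / 2 * σ + (Real.pi : ℂ) * ((p : ℂ) - (ρ : ℂ)) / 2)) (y : ℂ) :=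
    sin_linear_analyticAt _ _ _
  have hD0 : Complex.sin ((Real.pi : ℂ) / 2 * (y : ℂ) +
      (Real.pi : ℂ) * ((p : ℂ) - (ρ : ℂ)) / 2) = 0 := by
    rw [cp]; exact sin_pi_int m hm
  have hD' : deriv (fun σ : ℂ => Complex.sin
      ((Real.pi : ℂ) / 2 * σ + (Real.pi : ℂ) * ((p : ℂ) - (ρ : ℂ)) / 2)) (y : ℂ) ≠ 0 := by
    rw [sin_linear_deriv]
    refine mul_ne_zero (cos_ne_zero_of_sin_eq_zero hD0) ?_
    simpa using Real.pi_ne_zero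
  -- the eventual identity
  have hf : ∀ᶠ σ in nhdsWithin (y : ℂ) {(y : ℂ)}ᶜ,
      plancherelDensityReal p q ρ σ =
        (Complex.Gamma ((σ + (ρ : ℂ)) / 2) * Complex.Gamma (((ρ : ℂ) - σ) / 2) /
          (Complex.Gamma σ * Complex.Gamma (-σ) *
            Complex.sin ((Real.pi : ℂ) * (σ + (q : ℂ) - (ρ : ℂ)) / 2))) /
        Complex.sin ((Real.pi : ℂ) / 2 * σ + (Real.pi : ℂ) * ((p : ℂ) - (ρ : ℂ)) / 2) := by
    filter_upwards with σ
    have ep : (Real.pi : ℂ) * (σ + (p : ℂ) - (ρ : ℂ)) / 2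
        = (Real.pi : ℂ) / 2 * σ + (Real.pi : ℂ) * ((p : ℂ) - (ρ : ℂ)) / 2 := by ring
    simp only [plancherelDensityReal, ep]
    ring
  exact PlancherelAux.simple_pole hN hN0 hD hD0 hD' hf

open PlancherelAux in
/-- the double-pole case : the `p`-sine vanishes at `y` and `Γ((ρ-σ)/2)` also has a pole. -/
lemma plancherel_double_case (p q : ℕ) (ρ y : ℝ) (hy : 0 < y) (hyρ : 0 < y + ρ)
    (k : ℕ) (hk : (ρ - y) / 2 = -(k : ℝ))
    (hyint : ∀ m : ℤ, y ≠ (m : ℝ))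
    (hpz : ∃ m : ℤ, (y + p - ρ) / 2 = (m : ℝ))
    (hqz : ∀ j : ℤ, (y + q - ρ) / 2 ≠ (j : ℝ)) :
    ∃ c₂ c₁ : ℂ, c₂ ≠ 0 ∧ ∃ g : ℂ → ℂ, AnalyticAt ℂ g (y : ℂ) ∧
      ∀ᶠ σ in nhdsWithin (y : ℂ) {(y : ℂ)}ᶜ,
        plancherelDensityReal p q ρ σ = c₂ / (σ - y) ^ 2 + c₁ / (σ - y) + g σ := by
  obtain ⟨m, hm⟩ := hpz
  -- casts
  have c1 : ((y : ℂ) + (ρ : ℂ)) / 2 = (((y + ρ) / 2 : ℝ) : ℂ) := by push_cast; ring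
  have c3 : -(y : ℂ) = ((-y : ℝ) : ℂ) := by push_cast; ring
  have c5 : (1 : ℂ) - ((ρ : ℂ) - (y : ℂ)) / 2 = (((1 + k : ℕ) : ℝ) : ℂ) := by
    have h5 : (1 : ℝ) - (ρ - y) / 2 = ((1 + k : ℕ) : ℝ) := by rw [hk]; push_cast; ring
    have h6 := congrArg (fun t : ℝ => (t : ℂ)) h5
    push_cast at h6 ⊢
    linear_combination h6
  have cq : (Real.pi : ℂ) * ((y : ℂ) + (q : ℂ) - (ρ : ℂ)) / 2
      = (Real.pi : ℂ) * ((((y + q - ρ) / 2 : ℝ) : ℂ)) := by push_cast; ring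
  have cp : (Real.pi : ℂ) / 2 * (y : ℂ) + (Real.pi : ℂ) * ((p : ℂ) - (ρ : ℂ)) / 2
      = (Real.pi : ℂ) * ((((y + p - ρ) / 2 : ℝ) : ℂ)) := by push_cast; ring
  have cρ : -((Real.pi : ℂ) / 2) * (y : ℂ) + (Real.pi : ℂ) * (ρ : ℂ) / 2
      = (Real.pi : ℂ) * ((((ρ - y) / 2 : ℝ) : ℂ)) := by push_cast; ring
  -- Gamma facts
  have g1 := gamma_pt (pos_ne_neg_nat (by linarith : (0:ℝ) < (y + ρ) / 2))
  have g3 := gamma_pt (pos_ne_neg_nat hy)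
  have g4 : AnalyticAt ℂ Complex.Gamma ((-y : ℝ) : ℂ) ∧
      Complex.Gamma ((-y : ℝ) : ℂ) ≠ 0 := by
    refine gamma_pt ?_
    intro j hj
    exact hyint (j : ℤ) (by push_cast; linarith [hj])
  have g5 := gamma_pt (pos_ne_neg_nat
    (by positivity : (0:ℝ) < ((1 + k : ℕ) : ℝ)))
  have hsq : Complex.sin ((Real.pi : ℂ) * ((y : ℂ) + (q : ℂ) - (ρ : ℂ)) / 2) ≠ 0 := by
    rw [cq]; exact sin_pi_ne_zero hqz
  have hπ0 : (Real.pi : ℂ) ≠ 0 := Complex.ofReal_ne_zero.mpr Real.pi_ne_zero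
  -- analyticity of the pieces
  have a1 : AnalyticAt ℂ (fun σ : ℂ => Complex.Gamma ((σ + (ρ : ℂ)) / 2)) (y : ℂ) :=
    AnalyticAt.comp (g := Complex.Gamma) (f := fun σ : ℂ => (σ + (ρ : ℂ)) / 2)
      (show AnalyticAt ℂ Complex.Gamma (((y:ℂ) + (ρ:ℂ)) / 2) by rw [c1]; exact g1.1)
      (((differentiable_id.add_const _).div_const 2).analyticAt _)
  have a3 : AnalyticAt ℂ (fun σ : ℂ => Complex.Gamma σ) (y : ℂ) := g3.1
  have a4 : AnalyticAt ℂ (fun σ : ℂ => Complex.Gamma (-σ)) (y : ℂ) :=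
    AnalyticAt.comp (g := Complex.Gamma) (f := fun σ : ℂ => -σ)
      (show AnalyticAt ℂ Complex.Gamma (-(y:ℂ)) by rw [c3]; exact g4.1)
      (differentiable_id.neg.analyticAt _)
  have a5 : AnalyticAt ℂ
      (fun σ : ℂ => Complex.sin ((Real.pi : ℂ) * (σ + (q : ℂ) - (ρ : ℂ)) / 2)) (y : ℂ) :=
    (Complex.differentiable_sin.comp
      ((((differentiable_id.add_const _).sub_const _).const_mul _).div_const 2)).analyticAt _
  have a6 : AnalyticAt ℂ (fun σ : ℂ => Complex.Gamma (1 - ((ρ : ℂ) - σ) / 2)) (y : ℂ) :=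
    AnalyticAt.comp (g := Complex.Gamma) (f := fun σ : ℂ => 1 - ((ρ : ℂ) - σ) / 2)
      (show AnalyticAt ℂ Complex.Gamma (1 - ((ρ:ℂ) - (y:ℂ)) / 2) by rw [c5]; exact g5.1)
      ((((differentiable_const _).sub differentiable_id).div_const 2 |>.const_sub 1).analyticAt _)
  -- N and its properties
  have hN : AnalyticAt ℂ (fun σ : ℂ =>
      (Real.pi : ℂ) * Complex.Gamma ((σ + (ρ : ℂ)) / 2) /
        (Complex.Gamma (1 - ((ρ : ℂ) - σ) / 2) * Complex.Gamma σ * Complex.Gamma (-σ) *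
          Complex.sin ((Real.pi : ℂ) * (σ + (q : ℂ) - (ρ : ℂ)) / 2))) (y : ℂ) := by
    refine (analyticAt_const.mul a1).div (((a6.mul a3).mul a4).mul a5) ?_
    refine mul_ne_zero (mul_ne_zero (mul_ne_zero ?_ g3.2) ?_) hsq
    · rw [c5]; exact g5.2
    · rw [c3]; exact g4.2
  have hN0 : (Real.pi : ℂ) * Complex.Gamma (((y : ℂ) + (ρ : ℂ)) / 2) /
      (Complex.Gamma (1 - ((ρ : ℂ) - (y : ℂ)) / 2) * Complex.Gamma (y : ℂ) *
        Complex.Gamma (-(y : ℂ)) *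
        Complex.sin ((Real.pi : ℂ) * ((y : ℂ) + (q : ℂ) - (ρ : ℂ)) / 2)) ≠ 0 := by
    apply div_ne_zero
    · exact mul_ne_zero hπ0 (by rw [c1]; exact g1.2)
    · refine mul_ne_zero (mul_ne_zero (mul_ne_zero ?_ g3.2) ?_) hsq
      · rw [c5]; exact g5.2
      · rw [c3]; exact g4.2
  -- D₁ and its properties
  have hD₁ : AnalyticAt ℂ (fun σ : ℂ => Complex.sin
      ((Real.pi : ℂ) / 2 * σ + (Real.pi : ℂ) * ((p : ℂ) - (ρ : ℂ)) / 2)) (y : ℂ) :=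
    sin_linear_analyticAt _ _ _
  have hD₁0 : Complex.sin ((Real.pi : ℂ) / 2 * (y : ℂ) +
      (Real.pi : ℂ) * ((p : ℂ) - (ρ : ℂ)) / 2) = 0 := by
    rw [cp]; exact sin_pi_int m hm
  have hD₁' : deriv (fun σ : ℂ => Complex.sin
      ((Real.pi : ℂ) / 2 * σ + (Real.pi : ℂ) * ((p : ℂ) - (ρ : ℂ)) / 2)) (y : ℂ) ≠ 0 := by
    rw [sin_linear_deriv]
    refine mul_ne_zero (cos_ne_zero_of_sin_eq_zero hD₁0) (by simpa using Real.pi_ne_zero)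
  -- D₂ and its properties
  have hD₂ : AnalyticAt ℂ (fun σ : ℂ => Complex.sin
      (-((Real.pi : ℂ) / 2) * σ + (Real.pi : ℂ) * (ρ : ℂ) / 2)) (y : ℂ) :=
    sin_linear_analyticAt _ _ _
  have hD₂0 : Complex.sin (-((Real.pi : ℂ) / 2) * (y : ℂ) +
      (Real.pi : ℂ) * (ρ : ℂ) / 2) = 0 := by
    rw [cρ]; exact sin_pi_int (-(k : ℤ)) (by push_cast; linarith [hk])
  have hD₂' : deriv (fun σ : ℂ => Complex.sin
      (-((Real.pi : ℂ) / 2) * σ + (Real.pi : ℂ) * (ρ : ℂ) / 2)) (y : ℂ) ≠ 0 := by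
    rw [sin_linear_deriv]
    refine mul_ne_zero (cos_ne_zero_of_sin_eq_zero hD₂0) ?_
    intro h0
    rw [neg_eq_zero, div_eq_zero_iff] at h0
    rcases h0 with h0 | h0
    · exact hπ0 h0
    · norm_num at h0
  -- the eventual identity
  have hΓ1ne : ∀ᶠ σ in nhdsWithin (y : ℂ) {(y : ℂ)}ᶜ,
      Complex.Gamma (1 - ((ρ : ℂ) - σ) / 2) ≠ 0 :=
    nhdsWithin_le_nhds (a6.continuousAt.eventually_ne (by rw [c5]; exact g5.2))
  have hball : ∀ᶠ σ in nhdsWithin (y : ℂ) {(y : ℂ)}ᶜ, ‖σ - (y : ℂ)‖ < 2 := by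
    apply nhdsWithin_le_nhds
    have h2 := Metric.ball_mem_nhds (y : ℂ) (by norm_num : (0:ℝ) < 2)
    filter_upwards [h2] with σ hσ
    simpa [Complex.dist_eq] using hσ
  have hf : ∀ᶠ σ in nhdsWithin (y : ℂ) {(y : ℂ)}ᶜ,
      plancherelDensityReal p q ρ σ =
        ((Real.pi : ℂ) * Complex.Gamma ((σ + (ρ : ℂ)) / 2) /
          (Complex.Gamma (1 - ((ρ : ℂ) - σ) / 2) * Complex.Gamma σ * Complex.Gamma (-σ) *
            Complex.sin ((Real.pi : ℂ) * (σ + (q : ℂ) - (ρ : ℂ)) / 2))) /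
        (Complex.sin ((Real.pi : ℂ) / 2 * σ + (Real.pi : ℂ) * ((p : ℂ) - (ρ : ℂ)) / 2) *
          Complex.sin (-((Real.pi : ℂ) / 2) * σ + (Real.pi : ℂ) * (ρ : ℂ) / 2)) := by
    filter_upwards [hΓ1ne, hball, self_mem_nhdsWithin] with σ hΓσ hbσ hσy
    have hσy' : σ ≠ (y : ℂ) := hσy
    have hsρ : Complex.sin ((Real.pi : ℂ) * (((ρ : ℂ) - σ) / 2)) ≠ 0 := by
      intro h0
      obtain ⟨n, hn⟩ := Complex.sin_eq_zero_iff.mp h0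
      have hσeq : σ = (ρ : ℂ) - 2 * n := by
        have h7 : ((ρ : ℂ) - σ) / 2 = (n : ℂ) :=
          mul_left_cancel₀ hπ0 (hn.trans (mul_comm _ _))
        linear_combination -2 * h7
      have hyeq : (y : ℂ) = (ρ : ℂ) + 2 * (k : ℂ) := by
        have h8 : y = ρ + 2 * (k : ℝ) := by linarith [hk]
        exact_mod_cast h8
      have h9 : σ - (y : ℂ) = 2 * (((-(k:ℤ) - n : ℤ) : ℂ)) := by
        rw [hσeq, hyeq]; push_cast; ring
      have hkn : -(k : ℤ) - n = 0 := by
        by_contra hne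
        have h10 : (1 : ℝ) ≤ |((-(k:ℤ) - n : ℤ) : ℝ)| := by
          exact_mod_cast Int.one_le_abs (hne : -(k:ℤ) - n ≠ 0)
        have h11 : ‖σ - (y : ℂ)‖ = 2 * |((-(k:ℤ) - n : ℤ) : ℝ)| := by
          rw [h9, norm_mul, Complex.norm_intCast]
          norm_num
        rw [h11] at hbσ
        linarith
      apply hσy'
      rw [hσeq, hyeq]
      have hnk : n = -(k : ℤ) := by omega
      rw [hnk]; push_cast; ring
    have hrefl : Complex.Gamma (((ρ : ℂ) - σ) / 2)
        = (Real.pi : ℂ) / Complex.sin ((Real.pi : ℂ) * (((ρ : ℂ) - σ) / 2)) /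
          Complex.Gamma (1 - ((ρ : ℂ) - σ) / 2) := by
      rw [eq_div_iff hΓσ]
      exact Complex.Gamma_mul_Gamma_one_sub _
    have ep : (Real.pi : ℂ) * (σ + (p : ℂ) - (ρ : ℂ)) / 2
        = (Real.pi : ℂ) / 2 * σ + (Real.pi : ℂ) * ((p : ℂ) - (ρ : ℂ)) / 2 := by ring
    have eρ : (Real.pi : ℂ) * (((ρ : ℂ) - σ) / 2)
        = -((Real.pi : ℂ) / 2) * σ + (Real.pi : ℂ) * (ρ : ℂ) / 2 := by ring
    simp only [plancherelDensityReal]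
    rw [hrefl, eρ, ep]
    ring
  exact PlancherelAux.double_pole hN hN0 hD₁ hD₁0 hD₁' hD₂ hD₂0 hD₂' hf

/-- For `d = 1` with `p` even and `q` odd, the Plancherel density has on the ray `y > 0`:
simple poles at `y ∈ (ρ+2ℤ) ∩ (0,ρ)`, simple poles at `y ∈ (ρ+2ℤ+1) ∩ (0,∞)`, and
poles of order exactly two at `y ∈ ρ + 2ℕ`. -/
theorem plancherel_density_poles_p_even_q_odd
    (p q : ℕ) (hp : 2 ≤ p) (hq : 1 ≤ q) (hpe : Even p) (hqo : Odd q)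
    (ρ : ℝ) (hρ : ρ = ((p : ℝ) + q - 2) / 2) (y : ℝ) (hy : 0 < y) :
    ((∃ k : ℤ, y = ρ + 2 * k) → y < ρ →
      ∃ c : ℂ, c ≠ 0 ∧ ∃ g : ℂ → ℂ, AnalyticAt ℂ g (y : ℂ) ∧
        ∀ᶠ σ in nhdsWithin (y : ℂ) {(y : ℂ)}ᶜ,
          plancherelDensityReal p q ρ σ = c / (σ - y) + g σ) ∧
    ((∃ k : ℤ, y = ρ + 2 * k + 1) →
      ∃ c : ℂ, c ≠ 0 ∧ ∃ g : ℂ → ℂ, AnalyticAt ℂ g (y : ℂ) ∧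
        ∀ᶠ σ in nhdsWithin (y : ℂ) {(y : ℂ)}ᶜ,
          plancherelDensityReal p q ρ σ = c / (σ - y) + g σ) ∧
    ((∃ k : ℕ, y = ρ + 2 * k) →
      ∃ c₂ c₁ : ℂ, c₂ ≠ 0 ∧ ∃ g : ℂ → ℂ, AnalyticAt ℂ g (y : ℂ) ∧
        ∀ᶠ σ in nhdsWithin (y : ℂ) {(y : ℂ)}ᶜ,
          plancherelDensityReal p q ρ σ = c₂ / (σ - y) ^ 2 + c₁ / (σ - y) + g σ) := by
  obtain ⟨a, hpa⟩ := hpe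
  obtain ⟨b, hqb⟩ := hqo
  have hpa' : (p : ℝ) = 2 * a := by rw [hpa]; push_cast; ring
  have hqb' : (q : ℝ) = 2 * b + 1 := by rw [hqb]; push_cast; ring
  have hρpos : 0 < ρ := by
    rw [hρ]
    have : (2 : ℝ) ≤ p := by exact_mod_cast hp
    have : (1 : ℝ) ≤ q := by exact_mod_cast hq
    linarith
  refine ⟨?_, ?_, ?_⟩
  · -- simple poles at ρ + 2ℤ, 0 < y < ρ
    rintro ⟨k, hkeq⟩ hylt
    have hyint : ∀ m : ℤ, y ≠ (m : ℝ) := by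
      apply PlancherelAux.ne_int_of_odd (n := a + b + 2 * k - 1)
      rw [hkeq, hρ, hpa', hqb']; push_cast; ring
    apply plancherel_simple_case p q ρ y hy (by linarith)
    · intro m
      have : 0 < (ρ - y) / 2 := by linarith
      exact PlancherelAux.pos_ne_neg_nat this m
    · exact hyint
    · exact ⟨k + a, by rw [hkeq, hpa']; push_cast; ring⟩
    · intro j
      have h2 : 2 * ((y + q - ρ) / 2) = 2 * ((k + b : ℤ) : ℝ) + 1 := by
        rw [hkeq, hqb']; push_cast; ring
      exact PlancherelAux.ne_int_of_odd h2 j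
  · -- simple poles at ρ + 2ℤ + 1
    rintro ⟨k, hkeq⟩
    have hyint : ∀ m : ℤ, y ≠ (m : ℝ) := by
      apply PlancherelAux.ne_int_of_odd (n := a + b + 2 * k)
      rw [hkeq, hρ, hpa', hqb']; push_cast; ring
    have h := plancherel_simple_case q p ρ y hy (by linarith) ?_ hyint ?_ ?_
    · obtain ⟨c, hc, g, hg, hev⟩ := h
      refine ⟨c, hc, g, hg, ?_⟩
      filter_upwards [hev] with σ hσ
      rw [PlancherelAux.plancherel_swap p q ρ σ]; exact hσ
    · intro j hj
      have h2 : 2 * ((ρ - y) / 2) = 2 * ((-1 - k : ℤ) : ℝ) + 1 := by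
        rw [hkeq]; push_cast; ring
      exact PlancherelAux.ne_int_of_odd h2 (-(j : ℤ)) (by push_cast; linarith [hj])
    · exact ⟨k + b + 1, by rw [hkeq, hqb']; push_cast; ring⟩
    · intro j
      have h2 : 2 * ((y + p - ρ) / 2) = 2 * ((k + a : ℤ) : ℝ) + 1 := by
        rw [hkeq, hpa']; push_cast; ring
      exact PlancherelAux.ne_int_of_odd h2 j
  · -- double poles at ρ + 2ℕ
    rintro ⟨k, hkeq⟩
    have hyint : ∀ m : ℤ, y ≠ (m : ℝ) := by
      apply PlancherelAux.ne_int_of_odd (n := a + b + 2 * (k : ℤ) - 1)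
      rw [hkeq, hρ, hpa', hqb']; push_cast; ring
    apply plancherel_double_case p q ρ y hy (by linarith) k
      (by rw [hkeq]; ring) hyint
    · exact ⟨(k : ℤ) + a, by rw [hkeq, hpa']; push_cast; ring⟩
    · intro j
      have h2 : 2 * ((y + q - ρ) / 2) = 2 * (((k : ℤ) + b : ℤ) : ℝ) + 1 := by
        rw [hkeq, hqb']; push_cast; ring
      exact PlancherelAux.ne_int_of_odd h2 j
end

section
/- Define β(s) = (−1)^m·((s−ρ)/2)((s−ρ)/2 − 1)⋯((s−ρ)/2 − (m+ℓ)/2 + 1) / (Γ(m + dq/2)·Γ((s−ρ+ℓ−m+dp)/2)) for ℓ, m ∈ ℕ with ℓ ≡ m mod 2, d ∈ {1,2,4,8}, p ≥ 2, q ≥ 1, ρ = (d(p+q)−2)/2. Then for d = 1 and s = ρ + 2k with k ∈ ℕ: β(s) = 0 if and only if ℓ + m > 2k or m − ℓ ≥ 2k + p. -/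
/-- Zeros of the spectral coefficient `β_{ℓ,m}(s)` for `d = 1` at `s = ρ + 2k`:
`β(s) = 0` iff `ℓ + m > 2k` or `m - ℓ ≥ 2k + p`. -/
theorem beta_coefficient_zeros (p q ℓ m k : ℕ) (hp : 2 ≤ p) (hq : 1 ≤ q)
    (hparity : ℓ % 2 = m % 2) (ρ : ℝ) (hρ : ρ = ((p : ℝ) + q - 2) / 2)
    (s : ℂ) (hs : s = (ρ : ℂ) + 2 * k) (β : ℂ)
    (hβ : β = (-1 : ℂ) ^ m *
        (∏ i ∈ Finset.range ((m + ℓ) / 2), ((s - ρ) / 2 - i)) /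
        (Complex.Gamma ((m : ℂ) + (q : ℂ) / 2) *
          Complex.Gamma ((s - ρ + ℓ - m + p) / 2))) :
    β = 0 ↔ (2 * k < ℓ + m ∨ (m : ℤ) - (ℓ : ℤ) ≥ 2 * k + p) := by
  have hs' : s - (ρ : ℂ) = 2 * (k : ℕ) := by rw [hs]; ring
  rw [hβ, hs']
  have heven : (m + ℓ) % 2 = 0 := by omega
  -- simplify product terms
  have hterm : ∀ i ∈ Finset.range ((m + ℓ) / 2),
      (2 * (k : ℂ) / 2 - (i : ℂ)) = ((k : ℂ) - (i : ℂ)) := by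
    intro i _; ring
  rw [Finset.prod_congr rfl hterm]
  -- first Gamma is nonzero
  have hG1arg : (m : ℂ) + (q : ℂ) / 2 = (((m : ℝ) + (q : ℝ) / 2 : ℝ) : ℂ) := by
    push_cast; ring
  have hG1 : Complex.Gamma ((m : ℂ) + (q : ℂ) / 2) ≠ 0 := by
    rw [hG1arg]
    apply Complex.Gamma_ne_zero_of_re_pos
    rw [Complex.ofReal_re]
    have : (1 : ℝ) ≤ (q : ℝ) := by exact_mod_cast hq
    positivity
  -- second Gamma argument is real
  have hG2arg : (2 * (k : ℂ) + (ℓ : ℂ) - (m : ℂ) + (p : ℂ)) / 2 =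
      (((2 * (k : ℝ) + (ℓ : ℝ) - (m : ℝ) + (p : ℝ)) / 2 : ℝ) : ℂ) := by
    push_cast; ring
  constructor
  · intro h
    rw [div_eq_zero_iff, mul_eq_zero, mul_eq_zero] at h
    rcases h with (h | h) | (h | h)
    · exact absurd h (pow_ne_zero _ (by norm_num))
    · -- product is zero
      rw [Finset.prod_eq_zero_iff] at h
      obtain ⟨i, hi, hik⟩ := h
      have : (k : ℂ) = (i : ℂ) := by linear_combination hik
      have hki : k = i := by exact_mod_cast this
      rw [Finset.mem_range] at hi
      left; omega
    · exact absurd h hG1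
    · -- second Gamma zero
      rw [hG2arg, Complex.Gamma_eq_zero_iff] at h
      obtain ⟨n, hn⟩ := h
      have hn' : ((2 * (k : ℝ) + (ℓ : ℝ) - (m : ℝ) + (p : ℝ)) / 2 : ℝ) = -(n : ℝ) := by
        exact_mod_cast hn
      have hz : (2 * (k : ℤ) + (ℓ : ℤ) - (m : ℤ) + (p : ℤ)) = -(2 * (n : ℤ)) := by
        have : (2 * (k : ℝ) + (ℓ : ℝ) - (m : ℝ) + (p : ℝ)) = -(2 * (n : ℝ)) := by
          linarith
        exact_mod_cast this
      left; omega
  · intro h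
    have hlt : 2 * k < ℓ + m := by
      rcases h with h | h
      · exact h
      · omega
    have hk : k < (m + ℓ) / 2 := by omega
    apply div_eq_zero_iff.mpr
    left
    apply mul_eq_zero.mpr
    right
    apply Finset.prod_eq_zero (Finset.mem_range.mpr hk)
    ring
end
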